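/- For n odd, \sum_{\sigma \in D_n} (-1/q)^{wex(\sigma)} q^{cr(\sigma)} = 0, where D_n is the set of derangements of {1,...,n}. -/

import Mathlib

open Finset Polynomial
open scoped Classical

noncomputable section
/-- Extension of a permutation of `Fin n` to a function on `ℕ` acting on `{1,…,n}`,
with the conventions `permVal σ 0 = 0` and `permVal σ j = j` for `j > n`. -/
def permVal {n : ℕ} (σ : Equiv.Perm (Fin n)) (j : ℕ) : ℕ :=
  if h : 1 ≤ j ∧ j ≤ n then (σ ⟨j - 1, by omega⟩ : ℕ) + 1 else j

/-- Number of weak exceedances of a permutation of `{1,…,n}`. -/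
def wex {n : ℕ} (σ : Equiv.Perm (Fin n)) : ℕ :=
  ((Finset.Icc 1 n).filter fun i => i ≤ permVal σ i).card

/-- Number of crossings of a permutation of `{1,…,n}`: pairs `(i,j)` with
`i < j ≤ σ(i) < σ(j)` or `σ(i) < σ(j) < i < j`. -/
def cr {n : ℕ} (σ : Equiv.Perm (Fin n)) : ℕ :=
  (((Finset.Icc 1 n) ×ˢ (Finset.Icc 1 n)).filter fun p =>
    (p.1 < p.2 ∧ p.2 ≤ permVal σ p.1 ∧ permVal σ p.1 < permVal σ p.2) ∨
    (permVal σ p.1 < permVal σ p.2 ∧ permVal σ p.2 < p.1 ∧ p.1 < p.2)).card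

namespace Stmt7Aux

variable {n : ℕ}

lemma pv_mem (σ : Equiv.Perm (Fin n)) {i : ℕ} (hi : i ∈ Finset.Icc 1 n) :
    permVal σ i ∈ Finset.Icc 1 n := by
  simp only [Finset.mem_Icc] at hi ⊢
  rw [permVal, dif_pos hi]
  have := (σ ⟨i - 1, by omega⟩).isLt
  omega

lemma pv_inv (σ : Equiv.Perm (Fin n)) (i : ℕ) : permVal σ⁻¹ (permVal σ i) = i := by
  by_cases h : 1 ≤ i ∧ i ≤ n
  · have hlt := (σ ⟨i - 1, by omega⟩).isLt
    have e1 : permVal σ i = (σ ⟨i - 1, by omega⟩ : ℕ) + 1 := by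
      rw [permVal, dif_pos h]
    rw [e1, permVal, dif_pos ⟨by omega, by omega⟩]
    have h2 : (⟨(σ ⟨i - 1, by omega⟩ : ℕ) + 1 - 1, by omega⟩ : Fin n)
        = σ ⟨i - 1, by omega⟩ := by
      ext; simp
    rw [h2, ← Equiv.Perm.mul_apply, inv_mul_cancel, Equiv.Perm.one_apply]
    simp only [Fin.val_mk]
    omega
  · have e1 : permVal σ i = i := by rw [permVal, dif_neg h]
    rw [e1, permVal, dif_neg h]

lemma pv_inv2 (σ : Equiv.Perm (Fin n)) (i : ℕ) : permVal σ (permVal σ⁻¹ i) = i := by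
  have := pv_inv σ⁻¹ i; rwa [inv_inv] at this

lemma pv_ne (σ : Equiv.Perm (Fin n)) (hd : ∀ i, σ i ≠ i) {i : ℕ}
    (hi : i ∈ Finset.Icc 1 n) : permVal σ i ≠ i := by
  simp only [Finset.mem_Icc] at hi
  rw [permVal, dif_pos ⟨hi.1, hi.2⟩]
  intro h
  apply hd ⟨i - 1, by omega⟩
  have : (σ ⟨i - 1, by omega⟩ : ℕ) = i - 1 := by omega
  exact Fin.ext this

lemma hd_inv (σ : Equiv.Perm (Fin n)) (hd : ∀ i, σ i ≠ i) : ∀ i, σ⁻¹ i ≠ i := by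
  intro i h
  exact hd i (by conv_lhs => rw [← h, ← Equiv.Perm.mul_apply, mul_inv_cancel, Equiv.Perm.one_apply])

/-- general filter splitting -/
lemma card_filter_or_split {α : Type*} [DecidableEq α] (s : Finset α) (p q r : α → Prop)
    [DecidablePred p] [DecidablePred q] [DecidablePred r]
    (h : ∀ a ∈ s, p a ↔ (q a ∨ r a)) (hdisj : ∀ a ∈ s, ¬(q a ∧ r a)) :
    (s.filter p).card = (s.filter q).card + (s.filter r).card := by
  have hu : s.filter p = s.filter q ∪ s.filter r := by
    ext a
    simp only [mem_filter, mem_union]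
    constructor
    · rintro ⟨ha, hp⟩
      rcases (h a ha).1 hp with hq | hr
      · exact Or.inl ⟨ha, hq⟩
      · exact Or.inr ⟨ha, hr⟩
    · rintro (⟨ha, hq⟩ | ⟨ha, hr⟩)
      · exact ⟨ha, (h a ha).2 (Or.inl hq)⟩
      · exact ⟨ha, (h a ha).2 (Or.inr hr)⟩
  rw [hu, card_union_of_disjoint]
  rw [Finset.disjoint_filter]
  intro x hx hq hr
  exact hdisj x hx ⟨hq, hr⟩

variable (σ : Equiv.Perm (Fin n))

def Asc : Finset ℕ := (Finset.Icc 1 n).filter fun i => i < permVal σ i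
def Dsc : Finset ℕ := (Finset.Icc 1 n).filter fun i => permVal σ i < i
def SetA : Finset ℕ := (Finset.Icc 1 n).filter fun i =>
  i < permVal σ i ∧ permVal σ i < permVal σ (permVal σ i)
def SetD : Finset ℕ := (Finset.Icc 1 n).filter fun i =>
  i < permVal σ i ∧ permVal σ (permVal σ i) < permVal σ i
def SetB : Finset ℕ := (Finset.Icc 1 n).filter fun j =>
  permVal σ j < j ∧ permVal σ (permVal σ j) < permVal σ j
def SetC : Finset ℕ := (Finset.Icc 1 n).filter fun j =>
  permVal σ j < j ∧ permVal σ j < permVal σ (permVal σ j)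
def S12 : Finset (ℕ × ℕ) := ((Finset.Icc 1 n) ×ˢ (Finset.Icc 1 n)).filter fun p =>
  (p.1 < p.2 ∧ p.2 < permVal σ p.1 ∧ permVal σ p.1 < permVal σ p.2) ∨
  (permVal σ p.1 < permVal σ p.2 ∧ permVal σ p.2 < p.1 ∧ p.1 < p.2)

variable (hd : ∀ i, σ i ≠ i)
include hd

lemma wex_eq_asc : wex σ = (Asc σ).card := by
  unfold wex Asc
  apply congrArg
  apply filter_congr
  intro i hi
  have := pv_ne σ hd hi
  omega

lemma asc_split : (Asc σ).card = (SetA σ).card + (SetD σ).card := by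
  unfold Asc SetA SetD
  apply card_filter_or_split
  · intro i hi
    have := pv_ne σ hd (pv_mem σ hi)
    omega
  · intro i hi; omega

lemma dsc_split : (Dsc σ).card = (SetB σ).card + (SetC σ).card := by
  unfold Dsc SetB SetC
  apply card_filter_or_split
  · intro i hi
    have := pv_ne σ hd (pv_mem σ hi)
    omega
  · intro i hi; omega

lemma asc_dsc : (Asc σ).card + (Dsc σ).card = n := by
  unfold Asc Dsc
  have h := Finset.card_filter_add_card_filter_not
    (s := Finset.Icc 1 n) (p := fun i => i < permVal σ i)
  rw [Nat.card_Icc] at h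
  simp only [not_lt] at h
  have h2 : ((Finset.Icc 1 n).filter fun i => permVal σ i ≤ i).card
      = ((Finset.Icc 1 n).filter fun i => permVal σ i < i).card := by
    apply congrArg
    apply filter_congr
    intro i hi
    have := pv_ne σ hd hi
    omega
  omega

lemma wex_inv_eq : wex σ⁻¹ = (Dsc σ).card := by
  rw [wex_eq_asc σ⁻¹ (hd_inv σ hd)]
  unfold Asc Dsc
  apply Finset.card_nbij' (fun i => permVal σ⁻¹ i) (fun j => permVal σ j)
  · intro a ha
    simp only [mem_coe, mem_filter] at ha ⊢
    refine ⟨pv_mem _ ha.1, ?_⟩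
    rw [pv_inv2]
    exact ha.2
  · intro a ha
    simp only [mem_coe, mem_filter] at ha ⊢
    refine ⟨pv_mem _ ha.1, ?_⟩
    rw [pv_inv]
    exact ha.2
  · intro a ha; exact pv_inv2 σ a
  · intro a ha; exact pv_inv σ a

lemma setC_eq_setD : (SetC σ).card = (SetD σ).card := by
  have hinj : Function.Injective (permVal σ) :=
    Function.LeftInverse.injective (pv_inv σ)
  -- C2 and D2
  have hC : (SetC σ).card = ((Finset.Icc 1 n).filter fun k =>
      k < permVal σ k ∧ k < permVal σ⁻¹ k).card := by
    unfold SetC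
    apply Finset.card_nbij' (fun j => permVal σ j) (fun k => permVal σ⁻¹ k)
    · intro a ha
      simp only [mem_coe, mem_filter] at ha ⊢
      refine ⟨pv_mem _ ha.1, ha.2.2, ?_⟩
      rw [pv_inv]
      exact ha.2.1
    · intro a ha
      simp only [mem_coe, mem_filter] at ha ⊢
      refine ⟨pv_mem _ ha.1, ?_, ?_⟩
      · rw [pv_inv2]; exact ha.2.2
      · rw [pv_inv2]; exact ha.2.1
    · intro a ha; exact pv_inv σ a
    · intro a ha; exact pv_inv2 σ a
  have hD : (SetD σ).card = ((Finset.Icc 1 n).filter fun m =>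
      permVal σ m < m ∧ permVal σ⁻¹ m < m).card := by
    unfold SetD
    apply Finset.card_nbij' (fun i => permVal σ i) (fun m => permVal σ⁻¹ m)
    · intro a ha
      simp only [mem_coe, mem_filter] at ha ⊢
      refine ⟨pv_mem _ ha.1, ha.2.2, ?_⟩
      rw [pv_inv]
      exact ha.2.1
    · intro a ha
      simp only [mem_coe, mem_filter] at ha ⊢
      refine ⟨pv_mem _ ha.1, ?_, ?_⟩
      · rw [pv_inv2]; exact ha.2.2
      · rw [pv_inv2]; exact ha.2.1
    · intro a ha; exact pv_inv σ a
    · intro a ha; exact pv_inv2 σ a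
  rw [hC, hD]
  have himg : ∀ m, m ∈ (Asc σ).image (permVal σ) ↔
      m ∈ Finset.Icc 1 n ∧ permVal σ⁻¹ m < m := by
    intro m
    simp only [mem_image, Asc, mem_filter]
    constructor
    · rintro ⟨i, ⟨hi, hlt⟩, rfl⟩
      refine ⟨pv_mem _ hi, ?_⟩
      rw [pv_inv]
      exact hlt
    · rintro ⟨hm, hlt⟩
      refine ⟨permVal σ⁻¹ m, ⟨pv_mem _ hm, ?_⟩, pv_inv2 σ m⟩
      rw [pv_inv2]
      exact hlt
  have hC2 : ((Finset.Icc 1 n).filter fun k =>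
      k < permVal σ k ∧ k < permVal σ⁻¹ k) = Asc σ \ (Asc σ).image (permVal σ) := by
    ext k
    rw [mem_filter, mem_sdiff, himg]
    simp only [Asc, mem_filter]
    constructor
    · rintro ⟨hk, h1, h2⟩
      exact ⟨⟨hk, h1⟩, fun h => by have := h.2; omega⟩
    · rintro ⟨⟨hk, h1⟩, h2⟩
      have := pv_ne σ⁻¹ (hd_inv σ hd) hk
      refine ⟨hk, h1, ?_⟩
      by_contra h
      exact h2 ⟨hk, by omega⟩
  have hD2 : ((Finset.Icc 1 n).filter fun m =>
      permVal σ m < m ∧ permVal σ⁻¹ m < m) = (Asc σ).image (permVal σ) \ Asc σ := by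
    ext m
    rw [mem_filter, mem_sdiff, himg]
    simp only [Asc, mem_filter]
    constructor
    · rintro ⟨hm, h1, h2⟩
      exact ⟨⟨hm, h2⟩, fun h => by have := h.2; omega⟩
    · rintro ⟨⟨hm, h2⟩, h1⟩
      have := pv_ne σ hd hm
      refine ⟨hm, ?_, h2⟩
      by_contra h
      exact h1 ⟨hm, by omega⟩
  rw [hC2, hD2]
  apply Finset.card_sdiff_comm
  rw [Finset.card_image_of_injective _ hinj]

lemma cr_split : cr σ = (S12 σ).card + (SetA σ).card := by
  unfold cr S12
  have h1 : (((Finset.Icc 1 n) ×ˢ (Finset.Icc 1 n)).filter fun p =>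
      (p.1 < p.2 ∧ p.2 ≤ permVal σ p.1 ∧ permVal σ p.1 < permVal σ p.2) ∨
      (permVal σ p.1 < permVal σ p.2 ∧ permVal σ p.2 < p.1 ∧ p.1 < p.2)).card
      = (((Finset.Icc 1 n) ×ˢ (Finset.Icc 1 n)).filter fun p =>
      (p.1 < p.2 ∧ p.2 < permVal σ p.1 ∧ permVal σ p.1 < permVal σ p.2) ∨
      (permVal σ p.1 < permVal σ p.2 ∧ permVal σ p.2 < p.1 ∧ p.1 < p.2)).card
      + (((Finset.Icc 1 n) ×ˢ (Finset.Icc 1 n)).filter fun p =>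
      p.1 < p.2 ∧ p.2 = permVal σ p.1 ∧ permVal σ p.1 < permVal σ p.2).card := by
    apply card_filter_or_split
    · intro p _; omega
    · intro p _; omega
  rw [h1]
  congr 1
  unfold SetA
  apply Finset.card_nbij' (fun p => p.1) (fun i => (i, permVal σ i))
  · rintro ⟨a, b⟩ ha
    simp only [mem_coe, mem_filter, Finset.mem_product, mem_filter] at ha ⊢
    obtain ⟨⟨ha1, _⟩, h1, h2, h3⟩ := ha
    subst h2
    exact ⟨ha1, h1, h3⟩
  · intro i hi
    simp only [mem_coe, mem_filter, Finset.mem_product] at hi ⊢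
    exact ⟨⟨hi.1, pv_mem _ hi.1⟩, hi.2.1, trivial, hi.2.2⟩
  · rintro ⟨a, b⟩ ha
    simp only [mem_coe, mem_filter] at ha
    obtain ⟨_, _, h2, _⟩ := ha
    simp [← h2]
  · intro i hi; rfl

lemma cr_inv_split : cr σ⁻¹ = (S12 σ).card + (SetB σ).card := by
  have step1 : cr σ⁻¹ = (((Finset.Icc 1 n) ×ˢ (Finset.Icc 1 n)).filter fun p =>
      (permVal σ p.1 < permVal σ p.2 ∧ permVal σ p.2 ≤ p.1 ∧ p.1 < p.2) ∨
      (p.1 < p.2 ∧ p.2 < permVal σ p.1 ∧ permVal σ p.1 < permVal σ p.2)).card := by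
    unfold cr
    apply Finset.card_nbij' (fun p => (permVal σ⁻¹ p.1, permVal σ⁻¹ p.2))
      (fun p => (permVal σ p.1, permVal σ p.2))
    · rintro ⟨a, b⟩ ha
      simp only [mem_coe, mem_filter, Finset.mem_product] at ha ⊢
      obtain ⟨⟨ha1, ha2⟩, hc⟩ := ha
      refine ⟨⟨pv_mem _ ha1, pv_mem _ ha2⟩, ?_⟩
      rw [pv_inv2, pv_inv2]
      tauto
    · rintro ⟨a, b⟩ ha
      simp only [mem_coe, mem_filter, Finset.mem_product] at ha ⊢
      obtain ⟨⟨ha1, ha2⟩, hc⟩ := ha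
      refine ⟨⟨pv_mem _ ha1, pv_mem _ ha2⟩, ?_⟩
      rw [pv_inv, pv_inv]
      tauto
    · rintro ⟨a, b⟩ _
      simp only [Prod.mk.injEq]
      exact ⟨pv_inv2 σ a, pv_inv2 σ b⟩
    · rintro ⟨a, b⟩ _
      simp only [Prod.mk.injEq]
      exact ⟨pv_inv σ a, pv_inv σ b⟩
  rw [step1]
  unfold S12
  have h1 : (((Finset.Icc 1 n) ×ˢ (Finset.Icc 1 n)).filter fun p =>
      (permVal σ p.1 < permVal σ p.2 ∧ permVal σ p.2 ≤ p.1 ∧ p.1 < p.2) ∨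
      (p.1 < p.2 ∧ p.2 < permVal σ p.1 ∧ permVal σ p.1 < permVal σ p.2)).card
      = (((Finset.Icc 1 n) ×ˢ (Finset.Icc 1 n)).filter fun p =>
      (p.1 < p.2 ∧ p.2 < permVal σ p.1 ∧ permVal σ p.1 < permVal σ p.2) ∨
      (permVal σ p.1 < permVal σ p.2 ∧ permVal σ p.2 < p.1 ∧ p.1 < p.2)).card
      + (((Finset.Icc 1 n) ×ˢ (Finset.Icc 1 n)).filter fun p =>
      permVal σ p.2 = p.1 ∧ permVal σ p.1 < p.1 ∧ p.1 < p.2).card := by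
    apply card_filter_or_split
    · intro p _; omega
    · intro p _; omega
  rw [h1]
  congr 1
  unfold SetB
  apply Finset.card_nbij' (fun p => p.2) (fun j => (permVal σ j, j))
  · rintro ⟨a, b⟩ ha
    simp only [mem_coe, mem_filter, Finset.mem_product, mem_filter] at ha ⊢
    obtain ⟨⟨_, ha2⟩, h1, h2, h3⟩ := ha
    subst h1
    exact ⟨ha2, h3, h2⟩
  · intro j hj
    simp only [mem_coe, mem_filter, Finset.mem_product] at hj ⊢
    exact ⟨⟨pv_mem _ hj.1, hj.1⟩, trivial, hj.2.2, hj.2.1⟩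
  · rintro ⟨a, b⟩ ha
    simp only [mem_coe, mem_filter] at ha
    obtain ⟨_, h1, _⟩ := ha
    simp [← h1]
  · intro j hj; rfl

lemma key : cr σ + wex σ⁻¹ = cr σ⁻¹ + wex σ := by
  rw [cr_split σ hd, cr_inv_split σ hd, wex_inv_eq σ hd, wex_eq_asc σ hd,
    asc_split σ hd, dsc_split σ hd, setC_eq_setD σ hd]
  ring

lemma wex_le : wex σ ≤ n := by
  have := Finset.card_filter_le (Finset.Icc 1 n) (fun i => i ≤ permVal σ i)
  rw [Nat.card_Icc] at this
  unfold wex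
  omega

lemma wex_inv : wex σ⁻¹ = n - wex σ := by
  have h1 := wex_eq_asc σ hd
  have h2 := wex_inv_eq σ hd
  have h3 := asc_dsc σ hd
  omega

end Stmt7Aux

open Stmt7Aux in
theorem stmt7 (n : ℕ) (hn : Odd n) :
    ∑ σ ∈ Finset.univ.filter (fun σ : Equiv.Perm (Fin n) => ∀ i, σ i ≠ i),
      (-1 : Polynomial ℤ) ^ wex σ * X ^ (cr σ + (n - wex σ)) = 0 := by
  apply Finset.sum_involution (fun σ _ => σ⁻¹)
  · intro σ hσ
    simp only [mem_filter] at hσ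
    have hd := hσ.2
    have hwle := wex_le σ hd
    have hwinv := wex_inv σ hd
    have hkey := key σ hd
    have hexp : cr σ⁻¹ + (n - wex σ⁻¹) = cr σ + (n - wex σ) := by omega
    rw [hexp, hwinv]
    have hsign : (-1 : Polynomial ℤ) ^ wex σ + (-1 : Polynomial ℤ) ^ (n - wex σ) = 0 := by
      rcases Nat.even_or_odd (wex σ) with he | ho
      · have : Odd (n - wex σ) := Nat.Odd.sub_even hwle hn he
        rw [he.neg_one_pow, this.neg_one_pow]
        ring
      · have : Even (n - wex σ) := Nat.Odd.sub_odd hn ho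
        rw [ho.neg_one_pow, this.neg_one_pow]
        ring
    calc (-1 : Polynomial ℤ) ^ wex σ * X ^ (cr σ + (n - wex σ)) +
          (-1 : Polynomial ℤ) ^ (n - wex σ) * X ^ (cr σ + (n - wex σ))
        = ((-1 : Polynomial ℤ) ^ wex σ + (-1) ^ (n - wex σ)) * X ^ (cr σ + (n - wex σ)) := by
          ring
      _ = 0 := by rw [hsign]; ring
  · intro σ hσ _
    simp only [mem_filter] at hσ
    have hd := hσ.2
    intro h
    have h1 := wex_inv σ hd
    rw [h] at h1
    have h2 := wex_le σ hd
    rw [Nat.odd_iff] at hn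
    omega
  · intro σ _
    simp
  · intro σ hσ
    simp only [mem_filter, mem_univ, true_and] at hσ ⊢
    exact fun i h => hd_inv σ hσ i h
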